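/- For every integer k ≥ 0, if n = 7·F(2k+1) - 6 where F is the Fibonacci sequence (F(1) = F(2) = 1), then 7·(3·F(2k+1) - F(2k) - 3) = (7n)/2 - (1/2)·√(5(n+6)² - 196), i.e. the edge count of the complete k-layer spiral in the order-7 triangular tiling equals (7/2)n - (1/2)√(5(n+6)² - 14²). -/
import Mathlib


open Real

lemma fib_cassini_real (k : ℕ) :
    (Nat.fib (2 * k + 1) : ℝ) ^ 2 - (Nat.fib (2 * k + 1) : ℝ) * (Nat.fib (2 * k)) -
      (Nat.fib (2 * k) : ℝ) ^ 2 = 1 := by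
  induction k with
  | zero => simp
  | succ n ih =>
    have h1 : 2 * (n + 1) = 2 * n + 1 + 1 := by ring
    have h2 : 2 * (n + 1) + 1 = 2 * n + 1 + 1 + 1 := by ring
    rw [h2, h1, Nat.fib_add_two, Nat.fib_add_two]
    push_cast
    nlinarith [ih]

/-- For `n = 7 F_{2k+1} - 6`, the edge count `7(3 F_{2k+1} - F_{2k} - 3)` of the
complete `k`-layer spiral in the order-7 triangular tiling equals
`(7/2) n - (1/2) √(5 (n+6)² - 14²)`. -/
theorem spiral_edge_count (k : ℕ) :
    7 * (3 * (Nat.fib (2 * k + 1) : ℝ) - (Nat.fib (2 * k) : ℝ) - 3) =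
      (7 / 2) * (7 * (Nat.fib (2 * k + 1) : ℝ) - 6) -
        (1 / 2) * Real.sqrt (5 * ((7 * (Nat.fib (2 * k + 1) : ℝ) - 6) + 6) ^ 2 - 196) := by
  set F : ℝ := (Nat.fib (2 * k + 1) : ℝ) with hF
  set G : ℝ := (Nat.fib (2 * k) : ℝ) with hG
  have hc := fib_cassini_real k
  have hsq : 5 * ((7 * F - 6) + 6) ^ 2 - 196 = (7 * (F + 2 * G)) ^ 2 := by
    nlinarith [hc]
  have hpos : (0 : ℝ) ≤ 7 * (F + 2 * G) := by
    have : (0:ℝ) ≤ F := Nat.cast_nonneg _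
    have : (0:ℝ) ≤ G := Nat.cast_nonneg _
    positivity
  rw [hsq, Real.sqrt_sq hpos]
  ring
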